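/- For any n ≤ d^2, the set of tuples (φ_1, ..., φ_n) of vectors in ℂ^d for which the family of outer products {φ_iφ_i*}_{i=1}^n is linearly independent over ℝ in the space of d×d Hermitian matrices is open and dense in (ℂ^d)^n. -/

import Mathlib

/-- The outer product `x x*` of a vector `x ∈ ℂ^d` with itself:
the `d × d` matrix whose `(j,k)` entry is `x j * conj (x k)`. -/
def outer {d : ℕ} (x : EuclideanSpace ℂ (Fin d)) : Matrix (Fin d) (Fin d) ℂ :=
  Matrix.of fun j k => x j * starRingEnd ℂ (x k)

attribute [local instance] Matrix.normedAddCommGroup Matrix.normedSpace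

set_option linter.unnecessarySeqFocus false in
/-- Polarization: each standard basis matrix is a `ℂ`-linear combination of outer products. -/
lemma outer_polarization {d : ℕ} (j k : Fin d) :
    Matrix.single j k (1:ℂ) =
      (4:ℂ)⁻¹ • outer (EuclideanSpace.single j 1 + EuclideanSpace.single k 1)
      - (4:ℂ)⁻¹ • outer (EuclideanSpace.single j 1 - EuclideanSpace.single k 1)
      + (Complex.I/4) • outer (EuclideanSpace.single j 1 + Complex.I • EuclideanSpace.single k 1)
      - (Complex.I/4) • outer (EuclideanSpace.single j 1 - Complex.I • EuclideanSpace.single k 1) := by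
  ext a b
  simp only [outer, Matrix.single, Matrix.sub_apply, Matrix.add_apply, Matrix.smul_apply,
    Matrix.of_apply, PiLp.add_apply, PiLp.sub_apply, PiLp.smul_apply, smul_eq_mul,
    EuclideanSpace.single_apply, map_add, map_sub, map_mul, map_one, map_zero,
    Complex.conj_I]
  by_cases haj : a = j <;> by_cases hbk : b = k <;> by_cases hak : a = k <;>
    by_cases hbj : b = j <;> simp_all [eq_comm] <;>
    (try ring_nf) <;> (try simp [Complex.ext_iff]) <;> norm_num

/-- The outer products span all matrices over `ℂ`. -/
lemma span_outer_top (d : ℕ) :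
    Submodule.span ℂ (Set.range (outer (d := d))) = ⊤ := by
  rw [eq_top_iff]
  intro A _
  rw [Matrix.matrix_eq_sum_single A]
  refine Submodule.sum_mem _ fun j _ => Submodule.sum_mem _ fun k _ => ?_
  have h1 : Matrix.single j k (A j k) = A j k • Matrix.single j k (1:ℂ) := by
    rw [Matrix.smul_single, smul_eq_mul, mul_one]
  rw [h1, outer_polarization]
  have hm : ∀ x : EuclideanSpace ℂ (Fin d),
      outer x ∈ Submodule.span ℂ (Set.range (outer (d := d))) :=
    fun x => Submodule.subset_span ⟨x, rfl⟩
  exact Submodule.smul_mem _ _ (Submodule.sub_mem _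
    (Submodule.add_mem _
      (Submodule.sub_mem _ (Submodule.smul_mem _ _ (hm _)) (Submodule.smul_mem _ _ (hm _)))
      (Submodule.smul_mem _ _ (hm _))) (Submodule.smul_mem _ _ (hm _)))

/-- Any real subspace of dimension `< d²` misses some outer product. -/
lemma exists_outer_notmem {d : ℕ} (W : Submodule ℝ (Matrix (Fin d) (Fin d) ℂ))
    (hW : Module.finrank ℝ W < d ^ 2) : ∃ y, outer y ∉ W := by
  by_contra h
  push_neg at h
  obtain ⟨b, hbsub, hbspan, hbli⟩ := exists_linearIndependent ℂ (Set.range (outer (d := d)))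
  rw [span_outer_top] at hbspan
  have hfin : b.Finite := hbli.setFinite
  haveI := hfin.fintype
  let B : Module.Basis b ℂ (Matrix (Fin d) (Fin d) ℂ) :=
    Module.Basis.mk hbli (by rw [Subtype.range_coe]; exact hbspan.ge)
  have hcard : Fintype.card b = d ^ 2 := by
    have h1 := Module.finrank_eq_card_basis B
    rw [Module.finrank_matrix, Fintype.card_fin] at h1
    rw [← h1, pow_two]; simp [Module.finrank_self]
  have hliR : LinearIndependent ℝ ((↑) : b → Matrix (Fin d) (Fin d) ℂ) := by
    refine hbli.restrict_scalars ?_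
    intro r s hrs
    simpa using hrs
  let f : b → W := fun x => ⟨x.1, by
    obtain ⟨y, hy⟩ := hbsub x.2
    exact hy ▸ h y⟩
  have hlif : LinearIndependent ℝ f := by
    apply LinearIndependent.of_comp W.subtype
    exact hliR
  have := hlif.fintype_card_le_finrank
  omega

lemma outer_parallelogram {d : ℕ} (x y : EuclideanSpace ℂ (Fin d)) (t : ℝ) :
    outer (x + (t:ℂ) • y) + outer (x - (t:ℂ) • y)
      = (2:ℝ) • outer x + (2 * t ^ 2 : ℝ) • outer y := by
  ext a b
  simp only [outer, Matrix.add_apply, Matrix.smul_apply, Matrix.of_apply, PiLp.add_apply,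
    PiLp.sub_apply, PiLp.smul_apply, smul_eq_mul, map_add, map_sub, map_mul,
    Complex.conj_ofReal, Complex.real_smul]
  push_cast
  ring

/-- If `outer y ∉ W` then arbitrarily small perturbations of any `x` in direction `y`
escape `W`. -/
lemma quadratic_escape {d : ℕ} (W : Submodule ℝ (Matrix (Fin d) (Fin d) ℂ))
    {y : EuclideanSpace ℂ (Fin d)} (hy : outer y ∉ W) (x : EuclideanSpace ℂ (Fin d))
    {ε : ℝ} (hε : 0 < ε) : ∃ t : ℝ, |t| < ε ∧ outer (x + (t:ℂ) • y) ∉ W := by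
  by_contra hcon
  push_neg at hcon
  apply hy
  have hmem : ∀ t : ℝ, |t| < ε → outer (x + (t:ℂ) • y) ∈ W := hcon
  have hsub : ∀ t : ℝ, |t| < ε →
      ((2:ℝ) • outer x + (2 * t ^ 2 : ℝ) • outer y) ∈ W := by
    intro t ht
    have h1 := hmem t ht
    have h2 := hmem (-t) (by rwa [abs_neg])
    have h2' : outer (x - (t:ℂ) • y) ∈ W := by
      have : x + ((-t : ℝ) : ℂ) • y = x - (t:ℂ) • y := by
        push_cast
        rw [neg_smul, sub_eq_add_neg]
      rwa [this] at h2
    have := W.add_mem h1 h2'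
    rwa [outer_parallelogram] at this
  have e1 := hsub (ε/2) (by rw [abs_of_pos (by linarith)]; linarith)
  have e2 := hsub (ε/3) (by rw [abs_of_pos (by linarith)]; linarith)
  have e3 := W.sub_mem e1 e2
  have e4 : ((2:ℝ) • outer x + (2 * (ε/2) ^ 2 : ℝ) • outer y)
      - ((2:ℝ) • outer x + (2 * (ε/3) ^ 2 : ℝ) • outer y)
      = (2 * (ε/2) ^ 2 - 2 * (ε/3) ^ 2 : ℝ) • outer y := by
    rw [sub_smul]; abel
  rw [e4] at e3
  have hc : (2 * (ε/2) ^ 2 - 2 * (ε/3) ^ 2 : ℝ) ≠ 0 := by nlinarith [sq_nonneg ε]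
  have := W.smul_mem (2 * (ε/2) ^ 2 - 2 * (ε/3) ^ 2 : ℝ)⁻¹ e3
  rwa [smul_smul, inv_mul_cancel₀ hc, one_smul] at this

/-- Inductive construction: any tuple can be perturbed to one with independent outer products. -/
lemma aux_dense {d : ℕ} : ∀ k : ℕ, k ≤ d ^ 2 → ∀ (φ : Fin k → EuclideanSpace ℂ (Fin d))
    (ε : ℝ), 0 < ε → ∃ ψ : Fin k → EuclideanSpace ℂ (Fin d),
      (∀ i, ‖ψ i - φ i‖ < ε) ∧ LinearIndependent ℝ (fun i => outer (ψ i)) := by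
  intro k
  induction k with
  | zero =>
    intro _ φ ε hε
    exact ⟨φ, fun i => i.elim0, linearIndependent_empty_type⟩
  | succ k ih =>
    intro hk φ ε hε
    obtain ⟨ψ₀, hclose, hli⟩ := ih (le_trans (Nat.le_succ k) hk) (φ ∘ Fin.castSucc) ε hε
    set W := Submodule.span ℝ (Set.range fun i => outer (ψ₀ i)) with hWdef
    have hWlt : Module.finrank ℝ W < d ^ 2 := by
      have h1 : Module.finrank ℝ W ≤ k := by
        simpa [Set.finrank] using finrank_range_le_card (R := ℝ) fun i => outer (ψ₀ i)
      omega
    obtain ⟨y, hy⟩ := exists_outer_notmem W hWlt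
    have hypos : (0:ℝ) < ε / (‖y‖ + 1) := by positivity
    obtain ⟨t, ht, hnot⟩ := quadratic_escape W hy (φ (Fin.last k)) hypos
    refine ⟨Fin.snoc ψ₀ (φ (Fin.last k) + (t:ℂ) • y), ?_, ?_⟩
    · intro i
      refine Fin.lastCases ?_ ?_ i
      · simp only [Fin.snoc_last, add_sub_cancel_left]
        rw [norm_smul, Complex.norm_real, Real.norm_eq_abs]
        have hy0 : (0:ℝ) ≤ ‖y‖ := norm_nonneg y
        have h2 : |t| * (‖y‖ + 1) < ε := (lt_div_iff₀ (by linarith)).mp ht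
        nlinarith [abs_nonneg t]
      · intro j
        simpa [Fin.snoc_castSucc] using hclose j
    · have hfun : (fun i => outer ((Fin.snoc ψ₀ (φ (Fin.last k) + (t:ℂ) • y) :
              Fin (k+1) → EuclideanSpace ℂ (Fin d)) i))
          = Fin.snoc (fun i => outer (ψ₀ i)) (outer (φ (Fin.last k) + (t:ℂ) • y)) := by
        funext i
        refine Fin.lastCases ?_ ?_ i <;> simp [Fin.snoc_castSucc, Fin.snoc_last]
      rw [hfun, linearIndependent_fin_snoc]
      exact ⟨hli, hnot⟩

/-- For `n ≤ d²`, the set of `n`-tuples of vectors in `ℂ^d` whose outer products are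
linearly independent over `ℝ` (in the space of `d × d` Hermitian matrices)
is open and dense. -/
theorem stmt2 (d n : ℕ) (hn : n ≤ d ^ 2) :
    IsOpen {φ : Fin n → EuclideanSpace ℂ (Fin d) |
        LinearIndependent ℝ (fun i => outer (φ i))} ∧
    Dense {φ : Fin n → EuclideanSpace ℂ (Fin d) |
        LinearIndependent ℝ (fun i => outer (φ i))} := by
  constructor
  · have hcont : Continuous (fun φ : Fin n → EuclideanSpace ℂ (Fin d) => fun i => outer (φ i)) :=
      continuous_pi fun i =>
        (continuous_matrix fun a b => ((EuclideanSpace.proj a).continuous).mul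
          (Complex.continuous_conj.comp (EuclideanSpace.proj b).continuous)).comp
          (continuous_apply i)
    exact isOpen_setOf_linearIndependent.preimage hcont
  · rw [Metric.dense_iff]
    intro φ r hr
    obtain ⟨ψ, hclose, hli⟩ := aux_dense n hn φ r hr
    refine ⟨ψ, Metric.mem_ball.mpr ?_, hli⟩
    rcases Nat.eq_zero_or_pos n with hn0 | hn0
    · subst hn0
      simp [dist_pi_lt_iff hr]
    · haveI : Nonempty (Fin n) := ⟨⟨0, hn0⟩⟩
      rw [dist_pi_lt_iff hr]
      intro i
      rw [dist_eq_norm]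
      exact hclose i
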